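/- For natural numbers η and k with 0 ≤ k ≤ η, the inequality P[Bi(η+2, 1/2) ≥ k+1] > P[Bi(η, 1/2) ≥ k] holds if and only if k > η/2 + 1/2. -/
import Mathlib

/-- P[Bi(n,p) = k] -/
noncomputable def binomPMF (n k : ℕ) (p : ℝ) : ℝ :=
  (n.choose k : ℝ) * p ^ k * (1 - p) ^ (n - k)

/-- P[Bi(n,p) ≥ k] -/
noncomputable def binomGE (n k : ℕ) (p : ℝ) : ℝ :=
  ∑ m ∈ Finset.Icc k n, binomPMF n m p

/-- natural-number tail sum of binomial coefficients -/
def binomTail (n k : ℕ) : ℕ := ∑ m ∈ Finset.Icc k n, n.choose m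

lemma binomTail_split {n k : ℕ} (h : k ≤ n) :
    binomTail n k = n.choose k + binomTail n (k + 1) := by
  rw [binomTail, Finset.Icc_eq_cons_Ioc h, Finset.sum_cons, binomTail, Finset.Icc_add_one_left_eq_Ioc]

lemma binomTail_pascal {n k : ℕ} (h : k ≤ n) :
    binomTail (n + 1) (k + 1) = binomTail n k + binomTail n (k + 1) := by
  have hmap : Finset.Icc (k + 1) (n + 1)
      = Finset.map (addRightEmbedding 1) (Finset.Icc k n) := by
    rw [Finset.map_add_right_Icc]
  rw [binomTail, hmap, Finset.sum_map]
  simp only [addRightEmbedding_apply]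
  have hterm : ∀ m ∈ Finset.Icc k n, (n + 1).choose (m + 1) = n.choose m + n.choose (m + 1) :=
    fun m _ => Nat.choose_succ_succ n m
  rw [Finset.sum_congr rfl hterm, Finset.sum_add_distrib]
  congr 1
  have : ∑ m ∈ Finset.Icc k n, n.choose (m + 1)
      = ∑ m ∈ Finset.Icc (k + 1) (n + 1), n.choose m := by
    rw [hmap, Finset.sum_map]
    simp only [addRightEmbedding_apply]
  rw [this, Finset.sum_Icc_succ_top (by omega : k + 1 ≤ n + 1), Nat.choose_succ_self,
    add_zero, binomTail]

lemma binomTail_key {n k : ℕ} (h : k + 1 ≤ n) :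
    binomTail (n + 2) (k + 2) + n.choose (k + 1) = 4 * binomTail n (k + 1) + n.choose k := by
  have h0 : k ≤ n := by omega
  have e1 : binomTail (n + 2) (k + 2) = binomTail (n + 1) (k + 1) + binomTail (n + 1) (k + 2) :=
    binomTail_pascal (by omega)
  have e2 : binomTail (n + 1) (k + 1) = binomTail n k + binomTail n (k + 1) :=
    binomTail_pascal h0
  have e3 : binomTail (n + 1) (k + 2) = binomTail n (k + 1) + binomTail n (k + 2) :=
    binomTail_pascal h
  have e4 := binomTail_split h0
  have e5 := binomTail_split h
  have e6 : binomTail n (k + 1 + 1) = binomTail n (k + 2) := by norm_num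
  omega

lemma binomTail_zero (n : ℕ) : binomTail n 0 = 2 ^ n := by
  rw [binomTail, ← Finset.Ico_add_one_right_eq_Icc, Nat.Ico_zero_eq_range, Nat.sum_range_choose]

lemma binomGE_half (n k : ℕ) : binomGE n k (1 / 2) = (binomTail n k : ℝ) / 2 ^ n := by
  rw [binomGE, binomTail]
  push_cast
  rw [Finset.sum_div]
  refine Finset.sum_congr rfl fun m hm => ?_
  have hm' : m ≤ n := (Finset.mem_Icc.mp hm).2
  rw [binomPMF]
  have h1 : (1 : ℝ) - 1 / 2 = 1 / 2 := by norm_num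
  rw [h1, mul_assoc, ← pow_add, Nat.add_sub_cancel' hm', div_pow, one_pow]
  ring

lemma choose_compare {n j : ℕ} (h : j + 1 ≤ n) :
    (n.choose (j + 1) < n.choose j ↔ n + 1 < 2 * (j + 1)) := by
  have hpos : 0 < n.choose j := Nat.choose_pos (by omega)
  have hid : n.choose (j + 1) * (j + 1) = n.choose j * (n - j) := Nat.choose_succ_right_eq n j
  constructor
  · intro hlt
    have h2 := (Nat.mul_lt_mul_right (show 0 < j + 1 by omega)).mpr hlt
    rw [hid] at h2
    have h3 := Nat.lt_of_mul_lt_mul_left h2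
    omega
  · intro hlt
    have hsub : n - j < j + 1 := by omega
    have h2 := (Nat.mul_lt_mul_left hpos).mpr hsub
    rw [← hid] at h2
    exact (Nat.mul_lt_mul_right (show 0 < j + 1 by omega)).mp h2

theorem binom_half_tail_comparison (η k : ℕ) (hk : k ≤ η) :
    binomGE (η + 2) (k + 1) (1 / 2) > binomGE η k (1 / 2) ↔
      (k : ℝ) > (η : ℝ) / 2 + 1 / 2 := by
  have hL : binomGE (η + 2) (k + 1) (1 / 2) > binomGE η k (1 / 2) ↔
      binomTail η k * 4 < binomTail (η + 2) (k + 1) := by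
    rw [binomGE_half, binomGE_half, gt_iff_lt,
      div_lt_div_iff₀ (by positivity) (by positivity)]
    have h2 : (2 : ℝ) ^ (η + 2) = 2 ^ η * 4 := by ring
    rw [h2, ← mul_assoc]
    rw [mul_comm ((binomTail η k : ℝ)) ((2:ℝ) ^ η), mul_assoc,
      mul_comm ((binomTail (η+2) (k+1) : ℝ)) ((2:ℝ) ^ η)]
    rw [mul_lt_mul_iff_right₀ (by positivity : (0:ℝ) < 2 ^ η)]
    constructor
    · intro h; exact_mod_cast h
    · intro h; exact_mod_cast h
  have hR : ((k : ℝ) > (η : ℝ) / 2 + 1 / 2) ↔ η + 1 < 2 * k := by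
    rw [gt_iff_lt, show ((η : ℝ) / 2 + 1 / 2 < k) ↔ ((η : ℝ) + 1 < 2 * k) from
      ⟨fun h => by linarith, fun h => by linarith⟩]
    exact_mod_cast Iff.rfl
  rw [hL, hR]
  rcases Nat.eq_zero_or_pos k with rfl | hkpos
  · have h1 := binomTail_split (show (0:ℕ) ≤ η + 2 by omega)
    rw [binomTail_zero] at h1
    rw [binomTail_zero]
    simp only [Nat.choose_zero_right] at h1
    have hpow : (2:ℕ) ^ (η + 2) = 4 * 2 ^ η := by ring
    omega
  · obtain ⟨j, rfl⟩ : ∃ j, k = j + 1 := ⟨k - 1, by omega⟩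
    have hj : j + 1 ≤ η := hk
    have hkey := binomTail_key hj
    have hch := choose_compare hj
    have heq : binomTail (η + 2) (j + 1 + 1) = binomTail (η + 2) (j + 2) := by norm_num
    rw [heq]
    omega
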